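/- Let A be an n×n complex matrix, u, v ∈ ℂⁿ with v*u ≠ 0. Then for all sufficiently large real t > 0 there exists an eigenvalue λ(t) of A + t u v* such that λ(t) = (v*u)·t + (v*Au)/(v*u) + O(1/t) as t → ∞. -/

import Mathlib

open Matrix Filter Asymptotics Topology

set_option maxHeartbeats 1600000 in
theorem stmt11 {n : ℕ} (A : Matrix (Fin n) (Fin n) ℂ) (u v : Fin n → ℂ)
    (huv : star v ⬝ᵥ u ≠ 0) :
    ∃ T : ℝ, 0 < T ∧ ∃ lam : ℝ → ℂ,
      (∀ t : ℝ, T ≤ t → lam t ∈ spectrum ℂ (A + (t : ℂ) • vecMulVec u (star v))) ∧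
      (fun t : ℝ => lam t -
          ((star v ⬝ᵥ u) * (t : ℂ) + (star v ⬝ᵥ A.mulVec u) / (star v ⬝ᵥ u)))
        =O[atTop] fun t : ℝ => 1 / t := by
  classical
  set c : ℂ := star v ⬝ᵥ u with hc
  set d : ℂ := star v ⬝ᵥ A.mulVec u with hd
  -- the continuous linear map given by A
  set L : (Fin n → ℂ) →L[ℂ] (Fin n → ℂ) :=
    LinearMap.toContinuousLinearMap (Matrix.mulVecLin A) with hLdef
  have hL : ∀ y, L y = A *ᵥ y := fun y => rfl
  set M : ℂ → ((Fin n → ℂ) →L[ℂ] (Fin n → ℂ)) := fun z => 1 - z • L with hM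
  set N : ℂ → ((Fin n → ℂ) →L[ℂ] (Fin n → ℂ)) := fun z => Ring.inverse (M z) with hN
  have hMcont : Continuous M := continuous_const.sub (continuous_id.smul continuous_const)
  set U : Set ℂ := {z | IsUnit (M z)} with hU
  have hUopen : IsOpen U := Units.isOpen.preimage hMcont
  have hM0 : M 0 = 1 := by
    rw [hM]
    show (1 : (Fin n → ℂ) →L[ℂ] (Fin n → ℂ)) - (0:ℂ) • L = 1
    rw [zero_smul ℂ L, sub_zero]
  have hU0 : (0 : ℂ) ∈ U := by simp [hU, hM0]
  -- G z = v* (1 - z A)⁻¹ A u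
  set G : ℂ → ℂ := fun z => star v ⬝ᵥ (N z (A *ᵥ u)) with hG
  -- G is differentiable on U
  have hNdiff : DifferentiableOn ℂ N U := by
    intro z hz
    exact DifferentiableWithinAt.inverse
      ((differentiable_const _).sub
        (differentiable_id.smul_const L)).differentiableAt.differentiableWithinAt hz
  have hGdiff : DifferentiableOn ℂ G U := by
    have h1 : DifferentiableOn ℂ (fun z => N z (A *ᵥ u)) U :=
      fun z hz => (hNdiff z hz).clm_apply (differentiableWithinAt_const _)
    intro z hz
    have h2 : DifferentiableWithinAt ℂ (fun z => ∑ i, (star v i) * (N z (A *ᵥ u)) i) U z := by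
      apply DifferentiableWithinAt.fun_sum
      intro i _
      exact (differentiableWithinAt_const _).mul
        (((ContinuousLinearMap.proj i :
          ((Fin n → ℂ)) →L[ℂ] ℂ).differentiable.differentiableAt).comp_differentiableWithinAt
            z (h1 z hz))
    exact h2.congr (fun y _ => by simp [hG, dotProduct]) (by simp [hG, dotProduct])
  have hNzMz : ∀ z ∈ U, ∀ y, N z (M z y) = y := by
    intro z hz y
    have h := Ring.inverse_mul_cancel (M z) hz
    calc N z (M z y) = (N z * M z) y := rfl
    _ = y := by rw [hN, h]; rfl
  have hMzNz : ∀ z ∈ U, ∀ y, M z (N z y) = y := by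
    intro z hz y
    have h := Ring.mul_inverse_cancel (M z) hz
    calc M z (N z y) = (M z * N z) y := rfl
    _ = y := by rw [hN, h]; rfl
  have hG0 : G 0 = d := by
    simp [hG, hN, hM0, Ring.inverse_one, hd]
  -- key expansion: for z ∈ U, v* (N z u) = c + z * G z
  have hNu : ∀ z ∈ U, N z u = u + z • (N z (A *ᵥ u)) := by
    intro z hz
    have h1 : u = M z u + z • (A *ᵥ u) := by
      simp [hM, ContinuousLinearMap.sub_apply, hL]
    calc N z u = N z (M z u + z • (A *ᵥ u)) := by rw [← h1]
    _ = N z (M z u) + z • (N z (A *ᵥ u)) := by rw [map_add, ContinuousLinearMap.map_smul]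
    _ = u + z • (N z (A *ᵥ u)) := by rw [hNzMz z hz]
  have hFzu : ∀ z ∈ U, star v ⬝ᵥ (N z u) = c + z * G z := by
    intro z hz
    rw [hNu z hz, dotProduct_add, dotProduct_smul]
    simp [hG, hc, smul_eq_mul]
  -- the function H
  set H : ℂ → ℂ := fun z => z * (c + z * G z) with hH
  have hH0 : H 0 = 0 := by simp [hH]
  -- H has strict derivative c at 0
  have hGan : AnalyticAt ℂ G 0 := hGdiff.analyticAt (hUopen.mem_nhds hU0)
  have hGstrict : HasStrictDerivAt G (fderiv ℂ G 0 1) 0 :=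
    hGan.hasStrictFDerivAt.hasStrictDerivAt
  have hHstrict : HasStrictDerivAt H c 0 := by
    have h1 : HasStrictDerivAt (fun z : ℂ => c + z * G z)
        (fderiv ℂ G 0 1 * 0 + G 0 * 1) 0 := by
      have h0 := ((hasStrictDerivAt_id (0:ℂ)).fun_mul hGstrict)
      simpa [mul_comm] using (hasStrictDerivAt_const (0:ℂ) c).fun_add h0
    have h2 := (hasStrictDerivAt_id (0:ℂ)).fun_mul h1
    simpa [hH] using h2
  -- local inverse
  set ψ : ℂ → ℂ := hHstrict.localInverse H c 0 huv with hψ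
  have hψ0 : ψ 0 = 0 := by
    have h := (hHstrict.hasStrictFDerivAt_equiv huv).localInverse_apply_image
    rwa [hH0] at h
  have hψcont : ContinuousAt ψ 0 := by
    have h := (hHstrict.hasStrictFDerivAt_equiv huv).localInverse_continuousAt
    rwa [hH0] at h
  have hψright : ∀ᶠ w in 𝓝 (0:ℂ), H (ψ w) = w := by
    have h := (hHstrict.hasStrictFDerivAt_equiv huv).eventually_right_inverse
    rwa [hH0] at h
  have hψstrict : HasStrictDerivAt ψ c⁻¹ 0 := by
    have h := hHstrict.to_localInverse (hf' := huv)
    rwa [hH0] at h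
  -- eventually the inverse lands in U
  have hψmem : ∀ᶠ w in 𝓝 (0:ℂ), ψ w ∈ U := by
    apply hψcont.eventually_mem
    rw [hψ0]
    exact hUopen.mem_nhds hU0
  -- the function w(t) = 1/t tends to 0
  have hwt : Tendsto (fun t : ℝ => ((t : ℂ))⁻¹) atTop (𝓝 0) := by
    have h1 : Tendsto (fun t : ℝ => t⁻¹) atTop (𝓝 0) := tendsto_inv_atTop_zero
    have h2 := (Complex.continuous_ofReal.tendsto 0).comp h1
    simpa [Function.comp_def, Complex.ofReal_inv, Complex.ofReal_zero] using h2
  clear hψ hLdef hc hd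
  clear_value ψ H G U N M L d c
  have hQ : ∀ᶠ t : ℝ in atTop, H (ψ ((t:ℂ)⁻¹)) = (t:ℂ)⁻¹ ∧ ψ ((t:ℂ)⁻¹) ∈ U :=
    hwt.eventually (hψright.and hψmem)
  obtain ⟨T₀, hT₀⟩ := eventually_atTop.1 hQ
  refine ⟨max T₀ 1, lt_of_lt_of_le one_pos (le_max_right _ _), fun t => (ψ ((t:ℂ)⁻¹))⁻¹, ?_, ?_⟩
  · -- spectrum membership
    intro t ht
    show (ψ ((t:ℂ)⁻¹))⁻¹ ∈ spectrum ℂ (A + (t:ℂ) • vecMulVec u (star v))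
    have ht1 : (1:ℝ) ≤ t := le_trans (le_max_right _ _) ht
    have htpos : (0:ℝ) < t := lt_of_lt_of_le one_pos ht1
    have htc : (t:ℂ) ≠ 0 := by exact_mod_cast ne_of_gt htpos
    obtain ⟨hHw, hmem⟩ := hT₀ t (le_trans (le_max_left _ _) ht)
    set w : ℂ := ((t:ℂ))⁻¹ with hw
    set z : ℂ := ψ w with hz
    clear_value w z
    have hw0 : w ≠ 0 := by rw [hw]; exact inv_ne_zero htc
    have hz0 : z ≠ 0 := by
      intro h
      apply hw0
      rw [← hHw]
      show H z = 0
      rw [h, hH0]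
    -- the eigenvector
    set x : Fin n → ℂ := z • (N z u) with hx
    clear_value x
    have hvx : star v ⬝ᵥ x = w := by
      rw [hx, dotProduct_smul, smul_eq_mul, hFzu z hmem]
      rw [hH] at hHw
      exact hHw
    have hxne : x ≠ 0 := by
      intro h
      apply hw0
      rw [← hvx, h, dotProduct_zero]
    have hAx : A *ᵥ x = z⁻¹ • x - u := by
      have h1 : M z (N z u) = u := hMzNz z hmem u
      have h2 : N z u - z • (L (N z u)) = u := by
        simpa [hM, ContinuousLinearMap.sub_apply] using h1
      have h3 : A *ᵥ x = z • (A *ᵥ (N z u)) := by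
        rw [hx, Matrix.mulVec_smul]
      rw [h3, ← hL]
      have h4 : z • (L (N z u)) = N z u - u := by
        have h2' := congrArg (fun y => N z u - y) h2
        simpa [sub_sub_cancel] using h2'
      rw [h4]
      have h5 : z⁻¹ • x = N z u := by
        rw [hx, smul_smul, inv_mul_cancel₀ hz0, one_smul]
      rw [h5]
    have hvv : vecMulVec u (star v) *ᵥ x = (star v ⬝ᵥ x) • u := by
      funext i
      simp only [Matrix.mulVec, Matrix.vecMulVec_apply, dotProduct, Pi.smul_apply, smul_eq_mul]
      rw [Finset.sum_mul]
      exact Finset.sum_congr rfl fun j _ => by ring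
    have heig : (A + (t : ℂ) • vecMulVec u (star v)) *ᵥ x = z⁻¹ • x := by
      rw [Matrix.add_mulVec, Matrix.smul_mulVec, hvv, hvx, hAx, smul_smul, hw,
        mul_inv_cancel₀ htc, one_smul]
      abel
    -- conclude membership
    rw [spectrum.mem_iff]
    intro hunit
    set B : Matrix (Fin n) (Fin n) ℂ := algebraMap ℂ (Matrix (Fin n) (Fin n) ℂ) (z⁻¹)
        - (A + (t : ℂ) • vecMulVec u (star v)) with hB
    have hzero : B *ᵥ x = 0 := by
      rw [hB, Matrix.sub_mulVec, heig, Algebra.algebraMap_eq_smul_one, Matrix.smul_mulVec,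
        Matrix.one_mulVec]
      abel
    have key : ∀ (C : Matrix (Fin n) (Fin n) ℂ), IsUnit C → C *ᵥ x = 0 → x = 0 := by
      rintro C ⟨uC, rfl⟩ h0
      calc x = (1 : Matrix (Fin n) (Fin n) ℂ) *ᵥ x := by rw [Matrix.one_mulVec]
      _ = ((↑uC⁻¹ * ↑uC : Matrix (Fin n) (Fin n) ℂ)) *ᵥ x := by rw [uC.inv_mul]
      _ = (↑uC⁻¹ : Matrix (Fin n) (Fin n) ℂ) *ᵥ ((uC : Matrix (Fin n) (Fin n) ℂ) *ᵥ x) := by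
          rw [Matrix.mulVec_mulVec]
      _ = 0 := by rw [h0, Matrix.mulVec_zero]
    exact hxne (key B hunit hzero)
  · -- the asymptotic estimate
    set Φ : ℂ → ℂ := fun z => G z / (c + z * G z) - d / c with hΦ
    have hΦ0 : Φ 0 = 0 := by simp [hΦ, hG0]
    have hGd : DifferentiableAt ℂ G 0 := hGan.differentiableAt
    have hΦdiff : DifferentiableAt ℂ Φ 0 := by
      apply DifferentiableAt.sub_const
      apply hGd.div ((differentiableAt_const c).add (differentiableAt_id.mul hGd))
      simpa [hG0] using huv
    have hΦO : Φ =O[𝓝 (0:ℂ)] (fun z => z) := by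
      have h := hΦdiff.isBigO_sub
      simpa [hΦ0] using h
    have hψO : ψ =O[𝓝 (0:ℂ)] (fun w => w) := by
      have h := hψstrict.hasDerivAt.differentiableAt.isBigO_sub
      simpa [hψ0] using h
    have htend : Tendsto (fun t : ℝ => ψ ((t:ℂ)⁻¹)) atTop (𝓝 0) := by
      have h := hψcont.tendsto
      rw [hψ0] at h
      exact h.comp hwt
    have h1 : (fun t : ℝ => Φ (ψ ((t:ℂ)⁻¹))) =O[atTop] (fun t : ℝ => ψ ((t:ℂ)⁻¹)) := by
      have h := hΦO.comp_tendsto htend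
      simpa [Function.comp_def] using h
    have h2 : (fun t : ℝ => ψ ((t:ℂ)⁻¹)) =O[atTop] (fun t : ℝ => ((t:ℂ))⁻¹) := by
      have h := hψO.comp_tendsto hwt
      simpa [Function.comp_def] using h
    have h3 : (fun t : ℝ => ((t:ℂ))⁻¹) =O[atTop] (fun t : ℝ => 1/t) := by
      apply IsBigO.of_bound 1
      filter_upwards [eventually_ge_atTop (1:ℝ)] with t ht
      simp [Real.norm_eq_abs, abs_inv, one_div]
    have hEq : (fun t : ℝ => (ψ ((t:ℂ)⁻¹))⁻¹ - (c * (t:ℂ) + d / c)) =ᶠ[atTop]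
        (fun t : ℝ => Φ (ψ ((t:ℂ)⁻¹))) := by
      filter_upwards [hQ, eventually_ge_atTop (1:ℝ)] with t hQt ht1
      obtain ⟨hHw, hmem⟩ := hQt
      have htpos : (0:ℝ) < t := lt_of_lt_of_le one_pos ht1
      have htc : (t:ℂ) ≠ 0 := by exact_mod_cast ne_of_gt htpos
      set z : ℂ := ψ ((t:ℂ)⁻¹) with hz
      clear_value z
      have hw0 : ((t:ℂ))⁻¹ ≠ 0 := inv_ne_zero htc
      have hzS : z * (c + z * G z) = ((t:ℂ))⁻¹ := by rw [hH] at hHw; exact hHw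
      have hz0 : z ≠ 0 := by
        intro h; apply hw0; rw [← hzS, h, zero_mul]
      have hS0 : c + z * G z ≠ 0 := by
        intro h; apply hw0; rw [← hzS, h, mul_zero]
      have htval : (t:ℂ) = (z * (c + z * G z))⁻¹ := by
        rw [hzS, inv_inv]
      show z⁻¹ - (c * (t:ℂ) + d / c) = Φ z
      rw [htval, hΦ]
      field_simp
      ring
    exact hEq.trans_isBigO ((h1.trans h2).trans h3)
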